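/- Let n ≥ 1 and regard ℂⁿ as a real inner product space, so that its group of ℝ-linear isometric automorphisms is the orthogonal group O(2n). Let T be the subgroup of this group consisting of the maps v ↦ z·v for z ∈ (Circle)ⁿ acting by coordinatewise multiplication (the maximal torus). Then the centralizer of T in the group of ℝ-linear isometric automorphisms of ℂⁿ is exactly T itself. -/

import Mathlib

/-- The map `v ↦ (zᵢ·vᵢ)ᵢ` on `ℂⁿ` given by coordinatewise multiplication by an element
`z` of the torus `(Circle)ⁿ`. -/
noncomputable def torusElementAction (n : ℕ) (z : Fin n → Circle)
    (v : EuclideanSpace ℂ (Fin n)) : EuclideanSpace ℂ (Fin n) :=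
  WithLp.toLp 2 (fun i => (z i : ℂ) * v i)

private noncomputable def circNegOne : Circle :=
  ⟨-1, by simp [Submonoid.unitSphere, mem_sphere_zero_iff_norm]⟩

private noncomputable def circI : Circle :=
  ⟨Complex.I, by simp [Submonoid.unitSphere, mem_sphere_zero_iff_norm]⟩

private lemma euclidean_sum_single (n : ℕ) (v : EuclideanSpace ℂ (Fin n)) :
    v = ∑ i, EuclideanSpace.single i (v i) := by
  ext j
  rw [WithLp.ofLp_sum, Finset.sum_apply]
  simp [EuclideanSpace.single_apply]

/-- An ℝ-linear isometric automorphism of `ℂⁿ` (an element of `O(2n)`) commutes with every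
element of the maximal torus `Tⁿ = (Circle)ⁿ` (acting by coordinatewise multiplication) if
and only if it is itself given by an element of the torus: the centralizer of the maximal
torus in `O(2n)` is the torus itself. -/
theorem centralizer_of_maximal_torus_in_orthogonal_group_even
    (n : ℕ) (hn : 1 ≤ n)
    (f : EuclideanSpace ℂ (Fin n) ≃ₗᵢ[ℝ] EuclideanSpace ℂ (Fin n)) :
    (∀ z : Fin n → Circle, ∀ v : EuclideanSpace ℂ (Fin n),
        f (torusElementAction n z v) = torusElementAction n z (f v)) ↔
    (∃ z : Fin n → Circle, ∀ v : EuclideanSpace ℂ (Fin n),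
        f v = torusElementAction n z v) := by
  constructor
  · intro h
    -- off-diagonal vanishing
    have offdiag : ∀ (i : Fin n) (a : ℂ) (j : Fin n), j ≠ i →
        f (EuclideanSpace.single i a) j = 0 := by
      intro i a j hj
      set z : Fin n → Circle := fun k => if k = i then circNegOne else 1 with hz
      have h1 : torusElementAction n z (EuclideanSpace.single i a)
          = -(EuclideanSpace.single i a) := by
        ext k
        by_cases hk : k = i <;>
          simp [torusElementAction, hz, hk, EuclideanSpace.single_apply, circNegOne]
      have h2 := h z (EuclideanSpace.single i a)
      rw [h1, map_neg] at h2
      have h3 := congrArg (fun w => w j) h2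
      simp only [torusElementAction, PiLp.toLp_apply, hz, if_neg hj, Circle.coe_one, one_mul] at h3
      have h4 : -(f (EuclideanSpace.single i a) j)
          = f (EuclideanSpace.single i a) j := h3
      linear_combination -h4 / 2
    -- diagonal with I
    have diagI : ∀ (i : Fin n),
        f (EuclideanSpace.single i Complex.I) i
          = Complex.I * f (EuclideanSpace.single i (1 : ℂ)) i := by
      intro i
      set z : Fin n → Circle := fun k => if k = i then circI else 1 with hz
      have h1 : torusElementAction n z (EuclideanSpace.single i (1 : ℂ))
          = EuclideanSpace.single i Complex.I := by
        ext k
        by_cases hk : k = i <;>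
          simp [torusElementAction, hz, hk, EuclideanSpace.single_apply, circI]
      have h2 := h z (EuclideanSpace.single i (1 : ℂ))
      rw [h1] at h2
      have h3 := congrArg (fun w => w i) h2
      simpa [torusElementAction, hz, circI] using h3
    set c : Fin n → ℂ := fun i => f (EuclideanSpace.single i (1 : ℂ)) i with hc
    have fsingle : ∀ (i : Fin n) (a : ℂ),
        f (EuclideanSpace.single i a) = EuclideanSpace.single i (c i * a) := by
      intro i a
      have hdec : EuclideanSpace.single i a
          = a.re • EuclideanSpace.single i (1 : ℂ)
            + a.im • EuclideanSpace.single i Complex.I := by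
        ext k
        by_cases hk : k = i <;>
          simp [hk, EuclideanSpace.single_apply, Complex.ext_iff,
            Complex.smul_re, Complex.smul_im]
      rw [hdec, map_add, map_smul, map_smul]
      ext j
      by_cases hj : j = i
      · subst hj
        show a.re • f (EuclideanSpace.single j (1:ℂ)) j
            + a.im • f (EuclideanSpace.single j Complex.I) j = _
        rw [diagI j, EuclideanSpace.single_apply, if_pos rfl]
        simp only [Complex.real_smul]
        have hcc : f (EuclideanSpace.single j (1:ℂ)) j = c j := rfl
        rw [hcc]
        conv_rhs => rw [← Complex.re_add_im a]
        ring
      · show a.re • f (EuclideanSpace.single i (1:ℂ)) j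
            + a.im • f (EuclideanSpace.single i Complex.I) j = _
        rw [offdiag i _ j hj, offdiag i _ j hj, EuclideanSpace.single_apply, if_neg hj]
        simp
    have hnorm : ∀ i : Fin n, ‖c i‖ = 1 := by
      intro i
      have := f.norm_map (EuclideanSpace.single i (1 : ℂ))
      rw [fsingle i 1, mul_one] at this
      simpa [EuclideanSpace.norm_single] using this
    refine ⟨fun i => ⟨c i, by
      simp [Submonoid.unitSphere, mem_sphere_zero_iff_norm, hnorm i]⟩,
      fun v => ?_⟩
    conv_lhs => rw [euclidean_sum_single n v]
    rw [map_sum]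
    ext j
    rw [WithLp.ofLp_sum, Finset.sum_apply]
    have : ∀ i, f (EuclideanSpace.single i (v i)) j
        = EuclideanSpace.single i (c i * v i) j := fun i => by rw [fsingle]
    simp only [this, EuclideanSpace.single_apply]
    rw [Finset.sum_ite_eq Finset.univ j fun i => c i * v i]
    simp [torusElementAction, mul_comm]
  · rintro ⟨z, hz⟩ z' v
    rw [hz, hz]
    ext i
    simp [torusElementAction]
    ring
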